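/- Let Q(x,y,z) = ‖x v1 + y v2 + z v3‖² where v1, v2, v3 ∈ ℝ² are linearly independent over ℚ. Then for any plane P ⊂ ℝ³ (a 2-dimensional affine subspace) and any constant c > 0, the set of integer triples (x,y,z) ∈ P ∩ ℤ³ with Q(x,y,z) = c is finite. -/

import Mathlib

lemma quad_finite {α β γ : ℝ} (hα : α ≠ 0) : {s : ℝ | α * s ^ 2 + β * s + γ = 0}.Finite := by
  have hq : (Polynomial.C α * Polynomial.X ^ 2 + Polynomial.C β * Polynomial.X
      + Polynomial.C γ : Polynomial ℝ) ≠ 0 := by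
    intro h
    have h2 := congrArg (fun p => Polynomial.coeff p 2) h
    simp [Polynomial.coeff_add, Polynomial.coeff_C] at h2
    exact hα h2
  refine (Polynomial.finite_setOf_isRoot hq).subset ?_
  intro s hs
  simp only [Set.mem_setOf_eq, Polynomial.IsRoot, Polynomial.eval_add, Polynomial.eval_mul,
    Polynomial.eval_pow, Polynomial.eval_C, Polynomial.eval_X]
  exact hs

lemma line_sphere_finite {A b : EuclideanSpace ℝ (Fin 2)} (hb : b ≠ 0) (c : ℝ) :
    {s : ℝ | ‖A + s • b‖ ^ 2 = c}.Finite := by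
  have hb2 : ‖b‖ ^ 2 ≠ 0 := pow_ne_zero 2 (norm_ne_zero_iff.mpr hb)
  refine (quad_finite (β := 2 * (inner ℝ A b : ℝ)) (γ := ‖A‖ ^ 2 - c) hb2).subset ?_
  intro s hs
  simp only [Set.mem_setOf_eq] at hs ⊢
  have h1 : ‖A + s • b‖ ^ 2 = ‖A‖ ^ 2 + 2 * (s * (inner ℝ A b : ℝ)) + (|s| * ‖b‖) ^ 2 := by
    rw [norm_add_sq_real, real_inner_smul_right, norm_smul]
    norm_num
  rw [h1] at hs
  have := sq_abs s
  nlinarith [hs]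

theorem stmt_18 (v₁ v₂ v₃ : EuclideanSpace ℝ (Fin 2))
    (hind : LinearIndependent ℚ ![v₁, v₂, v₃])
    (P : AffineSubspace ℝ (Fin 3 → ℝ)) (hP : Module.finrank ℝ P.direction = 2)
    (c : ℝ) (hc : 0 < c) :
    {t : ℤ × ℤ × ℤ |
      (![(t.1 : ℝ), (t.2.1 : ℝ), (t.2.2 : ℝ)] : Fin 3 → ℝ) ∈ P ∧
        ‖(t.1 : ℝ) • v₁ + (t.2.1 : ℝ) • v₂ + (t.2.2 : ℝ) • v₃‖ ^ 2 = c}.Finite := by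
  classical
  -- integer linear independence
  have hint : ∀ a b d : ℤ, (a : ℝ) • v₁ + (b : ℝ) • v₂ + (d : ℝ) • v₃ = 0 →
      a = 0 ∧ b = 0 ∧ d = 0 := by
    have hZ : LinearIndependent ℤ ![v₁, v₂, v₃] := by
      refine hind.restrict_scalars ?_
      intro x y h
      simpa using h
    intro a b d h
    have := Fintype.linearIndependent_iff.mp hZ ![a, b, d] ?_
    · exact ⟨this 0, this 1, this 2⟩
    · rw [Fin.sum_univ_three]
      simp only [Matrix.cons_val_zero, Matrix.cons_val_one, Matrix.head_cons,
        Matrix.cons_val_two, Matrix.tail_cons]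
      rw [← Int.cast_smul_eq_zsmul ℝ, ← Int.cast_smul_eq_zsmul ℝ, ← Int.cast_smul_eq_zsmul ℝ]
      exact h
  -- the linear map
  set T : (Fin 3 → ℝ) →ₗ[ℝ] EuclideanSpace ℝ (Fin 2) :=
    (LinearMap.proj 0).smulRight v₁ + (LinearMap.proj 1).smulRight v₂
      + (LinearMap.proj 2).smulRight v₃ with hTdef
  have hTapp : ∀ p : Fin 3 → ℝ, T p = p 0 • v₁ + p 1 • v₂ + p 2 • v₃ := by
    intro p; simp [hTdef]
  set vec : ℤ × ℤ × ℤ → (Fin 3 → ℝ) :=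
    fun t => ![(t.1 : ℝ), (t.2.1 : ℝ), (t.2.2 : ℝ)] with hvecdef
  have hTvec : ∀ t : ℤ × ℤ × ℤ,
      T (vec t) = (t.1 : ℝ) • v₁ + (t.2.1 : ℝ) • v₂ + (t.2.2 : ℝ) • v₃ := by
    intro t
    rw [hTapp]
    simp [hvecdef]
  set S : Set (ℤ × ℤ × ℤ) := {t | vec t ∈ P ∧ ‖T (vec t)‖ ^ 2 = c} with hSdef
  have hgoal : {t : ℤ × ℤ × ℤ |
      (![(t.1 : ℝ), (t.2.1 : ℝ), (t.2.2 : ℝ)] : Fin 3 → ℝ) ∈ P ∧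
        ‖(t.1 : ℝ) • v₁ + (t.2.1 : ℝ) • v₂ + (t.2.2 : ℝ) • v₃‖ ^ 2 = c} = S := by
    ext t
    rw [hSdef]
    simp only [Set.mem_setOf_eq, hTvec t]
    exact Iff.rfl
  rw [hgoal]
  -- injectivity of T ∘ vec
  have hinj : Function.Injective (fun t : ℤ × ℤ × ℤ => T (vec t)) := by
    intro t t' h
    simp only [hTvec] at h
    have hsub : ((t.1 - t'.1 : ℤ) : ℝ) • v₁ + ((t.2.1 - t'.2.1 : ℤ) : ℝ) • v₂
        + ((t.2.2 - t'.2.2 : ℤ) : ℝ) • v₃ = 0 := by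
      have h0 : ((t.1 : ℝ) • v₁ + (t.2.1 : ℝ) • v₂ + (t.2.2 : ℝ) • v₃)
          - ((t'.1 : ℝ) • v₁ + (t'.2.1 : ℝ) • v₂ + (t'.2.2 : ℝ) • v₃) = 0 :=
        sub_eq_zero.mpr h
      push_cast
      rw [sub_smul, sub_smul, sub_smul, ← h0]
      abel
    obtain ⟨h1, h2, h3⟩ := hint _ _ _ hsub
    have e1 : t.1 = t'.1 := by omega
    have e2 : t.2.1 = t'.2.1 := by omega
    have e3 : t.2.2 = t'.2.2 := by omega
    exact Prod.ext e1 (Prod.ext e2 e3)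
  -- trivial case : S empty
  rcases S.eq_empty_or_nonempty with hSe | ⟨t₀, ht₀⟩
  · rw [hSe]; exact Set.finite_empty
  have hp₀P : vec t₀ ∈ P := ht₀.1
  have hnorm : ∀ t ∈ S, ‖T (vec t)‖ = Real.sqrt c := by
    intro t ht
    rw [← ht.2, Real.sqrt_sq (norm_nonneg _)]
  have hdir : ∀ t ∈ S, vec t - vec t₀ ∈ P.direction := by
    intro t ht
    have := AffineSubspace.vsub_mem_direction ht.1 hp₀P
    simpa [vsub_eq_sub] using this
  by_cases hker : ∀ w ∈ P.direction, T w = 0 → w = 0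
  · -- T injective on direction : S is bounded
    set f : P.direction →ₗ[ℝ] EuclideanSpace ℝ (Fin 2) := T.comp P.direction.subtype with hfdef
    have hfker : LinearMap.ker f = ⊥ := by
      rw [LinearMap.ker_eq_bot']
      intro m hm
      exact Subtype.ext (hker (m : Fin 3 → ℝ) m.2 (by simpa [hfdef] using hm))
    obtain ⟨K, hK0, hKa⟩ := f.exists_antilipschitzWith hfker
    set R : ℝ := ‖vec t₀‖ + K * (2 * Real.sqrt c) with hRdef
    set N : ℤ := ⌈R⌉ with hNdef
    have hbound : ∀ t ∈ S, ∀ i : Fin 3, |vec t i| ≤ R := by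
      intro t ht i
      have hw : vec t - vec t₀ ∈ P.direction := hdir t ht
      have hTle : ‖T (vec t - vec t₀)‖ ≤ 2 * Real.sqrt c := by
        rw [map_sub]
        calc ‖T (vec t) - T (vec t₀)‖ ≤ ‖T (vec t)‖ + ‖T (vec t₀)‖ := norm_sub_le _ _
        _ = 2 * Real.sqrt c := by rw [hnorm t ht, hnorm t₀ ht₀]; ring
      have hanti : ‖vec t - vec t₀‖ ≤ K * ‖T (vec t - vec t₀)‖ := by
        have := hKa.le_mul_dist ⟨vec t - vec t₀, hw⟩ 0
        simpa [hfdef, dist_eq_norm] using this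
      have h1 : ‖vec t - vec t₀‖ ≤ K * (2 * Real.sqrt c) :=
        hanti.trans (by
          have : (K : ℝ) * ‖T (vec t - vec t₀)‖ ≤ K * (2 * Real.sqrt c) :=
            mul_le_mul_of_nonneg_left hTle (by positivity)
          exact this)
      have h2 : ‖vec t‖ ≤ R := by
        calc ‖vec t‖ = ‖vec t₀ + (vec t - vec t₀)‖ := by ring_nf
        _ ≤ ‖vec t₀‖ + ‖vec t - vec t₀‖ := norm_add_le _ _
        _ ≤ R := by rw [hRdef]; linarith
      calc |vec t i| = ‖vec t i‖ := rfl
      _ ≤ ‖vec t‖ := norm_le_pi_norm (vec t) i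
      _ ≤ R := h2
    have hsub : S ⊆ Set.Icc ((-N, -N, -N) : ℤ × ℤ × ℤ) (N, N, N) := by
      intro t ht
      have hb : ∀ i : Fin 3, |vec t i| ≤ R := hbound t ht
      have hR : R ≤ (N : ℝ) := Int.le_ceil R
      have k1 : |(t.1 : ℝ)| ≤ (N : ℝ) := le_trans (by simpa [hvecdef] using hb 0) hR
      have k2 : |(t.2.1 : ℝ)| ≤ (N : ℝ) := le_trans (by simpa [hvecdef] using hb 1) hR
      have k3 : |(t.2.2 : ℝ)| ≤ (N : ℝ) := le_trans (by simpa [hvecdef] using hb 2) hR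
      have j1 : |t.1| ≤ N := by exact_mod_cast (by push_cast; exact k1 : ((|t.1| : ℤ) : ℝ) ≤ (N : ℝ))
      have j2 : |t.2.1| ≤ N := by
        exact_mod_cast (by push_cast; exact k2 : ((|t.2.1| : ℤ) : ℝ) ≤ (N : ℝ))
      have j3 : |t.2.2| ≤ N := by
        exact_mod_cast (by push_cast; exact k3 : ((|t.2.2| : ℤ) : ℝ) ≤ (N : ℝ))
      rw [abs_le] at j1 j2 j3
      constructor
      · exact ⟨j1.1, j2.1, j3.1⟩
      · exact ⟨j1.2, j2.2, j3.2⟩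
    exact (Set.finite_Icc _ _).subset hsub
  · -- degenerate case : image lies on a line
    push_neg at hker
    obtain ⟨k, hkW, hTk, hkne⟩ := hker
    set f : P.direction →ₗ[ℝ] EuclideanSpace ℝ (Fin 2) := T.comp P.direction.subtype with hfdef
    have hkerpos : 0 < Module.finrank ℝ (LinearMap.ker f) := by
      refine (Module.finrank_pos_iff (R := ℝ) (M := LinearMap.ker f)).mpr ?_
      refine ⟨⟨⟨k, hkW⟩, ?_⟩, 0, ?_⟩
      · rw [LinearMap.mem_ker]
        simpa [hfdef] using hTk
      · intro h
        have h' : (⟨k, hkW⟩ : P.direction) = 0 := Subtype.ext_iff.mp h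
        exact hkne (Subtype.ext_iff.mp h')
    have hrn := LinearMap.finrank_range_add_finrank_ker f
    rw [hP] at hrn
    have hle : Module.finrank ℝ (LinearMap.range f) ≤ 1 := by omega
    obtain ⟨b, hb⟩ := ((Submodule.finrank_le_one_iff_isPrincipal (LinearMap.range f)).mp hle).principal
    have key : ∀ t ∈ S, ∃ s : ℝ, T (vec t) = T (vec t₀) + s • b := by
      intro t ht
      have hw : vec t - vec t₀ ∈ P.direction := hdir t ht
      have hmem : T (vec t - vec t₀) ∈ LinearMap.range f := ⟨⟨vec t - vec t₀, hw⟩, rfl⟩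
      rw [hb, Submodule.mem_span_singleton] at hmem
      obtain ⟨s, hs⟩ := hmem
      refine ⟨s, ?_⟩
      have hsub' : T (vec t) - T (vec t₀) = s • b := by rw [← map_sub]; exact hs.symm
      exact sub_eq_iff_eq_add'.mp hsub'
    have himfin : ((fun t : ℤ × ℤ × ℤ => T (vec t)) '' S).Finite := by
      by_cases hb0 : b = 0
      · refine (Set.finite_singleton (T (vec t₀))).subset ?_
        rintro x ⟨t, ht, rfl⟩
        obtain ⟨s, hs⟩ := key t ht
        simp [hs, hb0]
      · refine (Set.Finite.image (fun s => T (vec t₀) + s • b)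
          (line_sphere_finite (A := T (vec t₀)) hb0 c)).subset ?_
        rintro x ⟨t, ht, rfl⟩
        obtain ⟨s, hs⟩ := key t ht
        exact ⟨s, by rw [Set.mem_setOf_eq, ← hs]; exact ht.2, hs.symm⟩
    exact Set.Finite.of_finite_image himfin (hinj.injOn)
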